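/- Let n ≥ 2 be an integer and p > 0. Let f : [0,∞) × (0,∞) → (0,∞) be continuous and let u be a positive C¹ solution of the integral equation (IE). Then for every x ∈ ℝⁿ, every λ > 0, and every ξ ∈ ℝⁿ ∖ {0} with ξ ≠ x and ξ^{x,λ} ≠ 0, one has u_{x,λ}(ξ) − u(ξ) = ∫_{{z : |z−x| ≥ λ}} K(x,λ;ξ,z) · [ f(|z|, u(z)) − (λ/|z−x|)^{p+2n} f(|z^{x,λ}|, u(z^{x,λ})) ] dz. -/

import Mathlib

open MeasureTheory

noncomputable section

/-- Inversion of `ξ` about the sphere of radius `l` centered at `x`. -/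
def inversion {n : ℕ} (x : EuclideanSpace ℝ (Fin n)) (l : ℝ)
    (ξ : EuclideanSpace ℝ (Fin n)) : EuclideanSpace ℝ (Fin n) :=
  x + (l ^ 2 / ‖ξ - x‖ ^ 2) • (ξ - x)

/-- Kelvin-type transform of `u` about the sphere of radius `l` centered at `x`. -/
def kelvin {n : ℕ} (p : ℝ) (u : EuclideanSpace ℝ (Fin n) → ℝ)
    (x : EuclideanSpace ℝ (Fin n)) (l : ℝ) (ξ : EuclideanSpace ℝ (Fin n)) : ℝ :=
  (‖ξ - x‖ / l) ^ p * u (inversion x l ξ)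

/-- The kernel `K(x, l; ξ, z)` in the moving-spheres computation. -/
def kernelK {n : ℕ} (p : ℝ) (x : EuclideanSpace ℝ (Fin n)) (l : ℝ)
    (ξ z : EuclideanSpace ℝ (Fin n)) : ℝ :=
  (‖z - x‖ / l) ^ p * ‖ξ - inversion x l z‖ ^ p - ‖ξ - z‖ ^ p

open Metric Module

local notation "E" n => EuclideanSpace ℝ (Fin n)

variable {n : ℕ}

lemma inversion_eq (x : E n) (l : ℝ) (ξ : E n) :
    inversion x l ξ = EuclideanGeometry.inversion x l ξ := by
  simp [inversion, EuclideanGeometry.inversion_def, dist_eq_norm, div_pow, add_comm,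
    vsub_eq_sub, vadd_eq_add]

lemma det_aux (l : ℝ) (hl : 0 < l) (x z : E n) (hz : z ≠ x) :
    |(((l / dist z x) ^ 2 • ((ℝ ∙ (z - x))ᗮ.reflection : (E n) →L[ℝ] (E n))).det)| =
      (l / ‖z - x‖) ^ (2 * n) := by
  have hzx : z - x ≠ 0 := sub_ne_zero.2 hz
  have hd : (0:ℝ) < ‖z - x‖ := norm_pos_iff.2 hzx
  have h1 : ((((ℝ ∙ (z - x))ᗮ.reflection : (E n) →L[ℝ] (E n))) :
      (E n) →ₗ[ℝ] (E n)) = (((ℝ ∙ (z - x))ᗮ.reflection).toLinearMap) := rfl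
  rw [ContinuousLinearMap.det, ContinuousLinearMap.coe_smul, h1, LinearMap.det_smul,
    Submodule.det_reflection,
    Submodule.orthogonal_orthogonal, finrank_span_singleton hzx]
  rw [finrank_euclideanSpace_fin, dist_eq_norm]
  rw [abs_mul, pow_one, abs_neg, abs_one, mul_one, ← pow_mul, abs_pow]
  rw [abs_of_nonneg (by positivity), mul_comm 2 n, pow_mul]

lemma image_inversion (x : E n) (l : ℝ) (hl : 0 < l) :
    EuclideanGeometry.inversion x l '' {z | l < ‖z - x‖} = (Metric.ball x l \ {x} : Set (E n)) := by
  ext y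
  constructor
  · rintro ⟨z, hz, rfl⟩
    have hzx : z ≠ x := by
      intro h; subst h; simp at hz; linarith
    have hd : (0:ℝ) < dist z x := dist_pos.2 hzx
    have hlt : l < dist z x := by simpa [dist_eq_norm] using hz
    constructor
    · rw [Metric.mem_ball, EuclideanGeometry.dist_inversion_center]
      calc l ^ 2 / dist z x < l ^ 2 / l := by
            apply div_lt_div_of_pos_left (by positivity) hl hlt
        _ = l := by field_simp [sq]
    · simp only [Set.mem_singleton_iff]
      rw [EuclideanGeometry.inversion_eq_center hl.ne']
      exact hzx
  · rintro ⟨hy, hy'⟩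
    have hyx : y ≠ x := by simpa using hy'
    have hd : (0:ℝ) < dist y x := dist_pos.2 hyx
    refine ⟨EuclideanGeometry.inversion x l y, ?_, EuclideanGeometry.inversion_inversion x hl.ne' y⟩
    simp only [Set.mem_setOf_eq, ← dist_eq_norm]
    rw [EuclideanGeometry.dist_inversion_center]
    rw [Metric.mem_ball] at hy
    calc l = l ^ 2 / l := by field_simp [sq]
      _ < l ^ 2 / dist y x := by apply div_lt_div_of_pos_left (by positivity) hd hy

lemma nontriv (hn : 0 < n) : Nontrivial (EuclideanSpace ℝ (Fin n)) := by
  have h := finrank_euclideanSpace_fin (𝕜 := ℝ) (n := n)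
  exact Module.nontrivial_of_finrank_pos (by omega : 0 < Module.finrank ℝ (E n))

lemma cov (hn : 0 < n) (x : E n) (l : ℝ) (hl : 0 < l) (h : (E n) → ℝ) :
    ∫ y in Metric.ball x l, h y =
      ∫ z in {z : E n | l ≤ ‖z - x‖}, (l / ‖z - x‖) ^ (2 * n) *
        h (EuclideanGeometry.inversion x l z) := by
  haveI := nontriv hn
  have hsph0 : volume (Metric.sphere x (0:ℝ)) = 0 := Measure.addHaar_sphere volume x 0
  have hsph : volume (Metric.sphere x l) = 0 := Measure.addHaar_sphere volume x l
  have hx0 : volume ({x} : Set (E n)) = 0 := by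
    refine measure_mono_null ?_ hsph0
    intro y hy; simp_all [Metric.mem_sphere]
  have hAo : MeasurableSet {z : E n | l < ‖z - x‖} := by
    have : IsOpen {z : E n | l < ‖z - x‖} :=
      isOpen_lt continuous_const ((continuous_id.sub continuous_const).norm)
    exact this.measurableSet
  -- replace A by Ao
  have hae : ({z : E n | l ≤ ‖z - x‖} : Set (E n)) =ᵐ[volume] {z : E n | l < ‖z - x‖} := by
    refine MeasureTheory.ae_eq_set.2 ⟨measure_mono_null ?_ hsph, ?_⟩
    · intro z hz
      simp only [Set.mem_diff, Set.mem_setOf_eq, not_lt] at hz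
      simp [Metric.mem_sphere, dist_eq_norm, le_antisymm hz.2 hz.1]
    · have : {z : E n | l < ‖z - x‖} \ {z : E n | l ≤ ‖z - x‖} = ∅ := by
        ext z; simp only [Set.mem_diff, Set.mem_setOf_eq, not_le, Set.mem_empty_iff_false,
          iff_false]; rintro ⟨h1, h2⟩; linarith
      simp [this]
  rw [MeasureTheory.setIntegral_congr_set hae]
  -- replace ball by ball minus x
  have hae2 : (Metric.ball x l : Set (E n)) =ᵐ[volume] ((Metric.ball x l \ ({x} : Set (E n)) : Set (E n))) :=
    (MeasureTheory.diff_ae_eq_self.2 (measure_mono_null Set.inter_subset_right hx0)).symm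
  rw [MeasureTheory.setIntegral_congr_set hae2]
  rw [← image_inversion x l hl]
  rw [MeasureTheory.integral_image_eq_integral_abs_det_fderiv_smul volume hAo
    (f' := fun z => (l / dist z x) ^ 2 • ((ℝ ∙ (z - x))ᗮ.reflection : (E n) →L[ℝ] (E n)))
    (fun z hz => by
      have hzx : z ≠ x := by
        intro hzz; subst hzz; simp only [Set.mem_setOf_eq, sub_self, norm_zero] at hz; linarith
      exact (EuclideanGeometry.hasFDerivAt_inversion hzx).hasFDerivWithinAt)
    ((EuclideanGeometry.inversion_injective x hl.ne').injOn) h]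
  refine MeasureTheory.setIntegral_congr_fun hAo (fun z hz => ?_)
  have hzx : z ≠ x := by
    intro hzz; subst hzz; simp only [Set.mem_setOf_eq, sub_self, norm_zero] at hz; linarith
  rw [smul_eq_mul, det_aux l hl x z hzx]

lemma cov_int (hn : 0 < n) (x : E n) (l : ℝ) (hl : 0 < l) (h : (E n) → ℝ)
    (hint : IntegrableOn h (Metric.ball x l)) :
    IntegrableOn (fun z => (l / ‖z - x‖) ^ (2 * n) *
      h (EuclideanGeometry.inversion x l z)) {z : E n | l ≤ ‖z - x‖} := by
  haveI := nontriv hn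
  have hsph : volume (Metric.sphere x l) = 0 := Measure.addHaar_sphere volume x l
  have hAo : MeasurableSet {z : E n | l < ‖z - x‖} := by
    have : IsOpen {z : E n | l < ‖z - x‖} :=
      isOpen_lt continuous_const ((continuous_id.sub continuous_const).norm)
    exact this.measurableSet
  have hae : ({z : E n | l ≤ ‖z - x‖} : Set (E n)) =ᵐ[volume] {z : E n | l < ‖z - x‖} := by
    refine MeasureTheory.ae_eq_set.2 ⟨measure_mono_null ?_ hsph, ?_⟩
    · intro z hz
      simp only [Set.mem_diff, Set.mem_setOf_eq, not_lt] at hz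
      simp [Metric.mem_sphere, dist_eq_norm, le_antisymm hz.2 hz.1]
    · have : {z : E n | l < ‖z - x‖} \ {z : E n | l ≤ ‖z - x‖} = ∅ := by
        ext z; simp only [Set.mem_diff, Set.mem_setOf_eq, not_le, Set.mem_empty_iff_false,
          iff_false]; rintro ⟨h1, h2⟩; linarith
      simp [this]
  rw [IntegrableOn, Measure.restrict_congr_set hae]
  have hint' : IntegrableOn h (EuclideanGeometry.inversion x l '' {z : E n | l < ‖z - x‖}) := by
    rw [image_inversion x l hl]
    exact hint.mono_set Set.diff_subset
  rw [MeasureTheory.integrableOn_image_iff_integrableOn_abs_det_fderiv_smul volume hAo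
    (f' := fun z => (l / dist z x) ^ 2 • ((ℝ ∙ (z - x))ᗮ.reflection : (E n) →L[ℝ] (E n)))
    (fun z hz => by
      have hzx : z ≠ x := by
        intro hzz; subst hzz; simp only [Set.mem_setOf_eq, sub_self, norm_zero] at hz; linarith
      exact (EuclideanGeometry.hasFDerivAt_inversion hzx).hasFDerivWithinAt)
    ((EuclideanGeometry.inversion_injective x hl.ne').injOn) h] at hint'
  refine hint'.congr_fun (fun z hz => ?_) hAo
  have hzx : z ≠ x := by
    intro hzz; subst hzz; simp only [Set.mem_setOf_eq, sub_self, norm_zero] at hz; linarith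
  beta_reduce
  rw [smul_eq_mul, det_aux l hl x z hzx]


set_option maxHeartbeats 2000000 in
theorem stmt_6 {n : ℕ} (hn : 2 ≤ n) (p : ℝ) (hp : 0 < p)
    (f : ℝ → ℝ → ℝ)
    (hf_cont : ContinuousOn (fun q : ℝ × ℝ => f q.1 q.2) (Set.Ici 0 ×ˢ Set.Ioi 0))
    (hf_pos : ∀ α : ℝ, 0 ≤ α → ∀ β : ℝ, 0 < β → 0 < f α β)
    (u : EuclideanSpace ℝ (Fin n) → ℝ)
    (hu_pos : ∀ x : EuclideanSpace ℝ (Fin n), x ≠ 0 → 0 < u x)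
    (hu_C1 : ContDiffOn ℝ 1 u {(0 : EuclideanSpace ℝ (Fin n))}ᶜ)
    (hIE : ∀ x : EuclideanSpace ℝ (Fin n), x ≠ 0 →
      u x = ∫ y : EuclideanSpace ℝ (Fin n), ‖x - y‖ ^ p * f ‖y‖ (u y)) :
    ∀ x : EuclideanSpace ℝ (Fin n), ∀ lam : ℝ, 0 < lam →
      ∀ ξ : EuclideanSpace ℝ (Fin n), ξ ≠ 0 → ξ ≠ x → inversion x lam ξ ≠ 0 →
        kelvin p u x lam ξ - u ξ =
          ∫ z in {z : EuclideanSpace ℝ (Fin n) | lam ≤ ‖z - x‖},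
            kernelK p x lam ξ z *
              (f ‖z‖ (u z) -
                (lam / ‖z - x‖) ^ (p + 2 * (n : ℝ)) *
                  f ‖inversion x lam z‖ (u (inversion x lam z))) := by
  intro x lam hlam ξ hξ0 hξx hinv0
  have hn0 : 0 < n := by omega
  set g : (E n) → ℝ := fun y => f ‖y‖ (u y) with hg
  -- integrability of the integral-equation integrand
  have hGint : ∀ w : E n, w ≠ 0 → Integrable (fun y => ‖w - y‖ ^ p * g y) := by
    intro w hw
    by_contra hni
    have h0 := hIE w hw
    rw [MeasureTheory.integral_undef hni] at h0
    exact absurd h0 (hu_pos w hw).ne'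
  set ξs : E n := EuclideanGeometry.inversion x lam ξ with hξs
  have hξs' : inversion x lam ξ = ξs := inversion_eq x lam ξ
  have hξs0 : ξs ≠ 0 := hξs' ▸ hinv0
  set A : Set (E n) := {z : E n | lam ≤ ‖z - x‖} with hA
  have hAc : A = (Metric.ball x lam)ᶜ := by
    ext z; simp [hA, Metric.mem_ball, dist_eq_norm, not_lt]
  -- key decomposition
  have key : ∀ w : E n, w ≠ 0 →
      u w = (∫ z in A, (lam / ‖z - x‖) ^ (2 * n) * (‖w - EuclideanGeometry.inversion x lam z‖ ^ p *
          g (EuclideanGeometry.inversion x lam z))) + ∫ z in A, ‖w - z‖ ^ p * g z := by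
    intro w hw
    rw [hIE w hw, ← MeasureTheory.integral_add_compl
      (Metric.isOpen_ball.measurableSet : MeasurableSet (Metric.ball x lam)) (hGint w hw), ← hAc]
    congr 1
    exact cov hn0 x lam hlam (fun y => ‖w - y‖ ^ p * g y)
  -- integrability of the four pieces
  have hIξ : IntegrableOn (fun z => ‖ξ - z‖ ^ p * g z) A := (hGint ξ hξ0).integrableOn
  have hIξs : IntegrableOn (fun z => ‖ξs - z‖ ^ p * g z) A := (hGint ξs hξs0).integrableOn
  have hIξi : IntegrableOn (fun z => (lam / ‖z - x‖) ^ (2 * n) *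
      (‖ξ - EuclideanGeometry.inversion x lam z‖ ^ p *
      g (EuclideanGeometry.inversion x lam z))) A :=
    cov_int hn0 x lam hlam (fun y => ‖ξ - y‖ ^ p * g y) (hGint ξ hξ0).integrableOn
  have hIξsi : IntegrableOn (fun z => (lam / ‖z - x‖) ^ (2 * n) *
      (‖ξs - EuclideanGeometry.inversion x lam z‖ ^ p *
      g (EuclideanGeometry.inversion x lam z))) A :=
    cov_int hn0 x lam hlam (fun y => ‖ξs - y‖ ^ p * g y) (hGint ξs hξs0).integrableOn
  set c : ℝ := (‖ξ - x‖ / lam) ^ p with hc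
  have hkelvin : kelvin p u x lam ξ = c * u ξs := by rw [kelvin, hξs']
  rw [hkelvin, key ξs hξs0, key ξ hξ0]
  rw [mul_add, ← MeasureTheory.integral_const_mul, ← MeasureTheory.integral_const_mul]
  rw [← MeasureTheory.integral_add (hIξsi.const_mul c) (hIξs.const_mul c),
    ← MeasureTheory.integral_add hIξi hIξ]
  have h1int : IntegrableOn (fun z => c * ((lam / ‖z - x‖) ^ (2 * n) *
      (‖ξs - EuclideanGeometry.inversion x lam z‖ ^ p *
        g (EuclideanGeometry.inversion x lam z))) + c * (‖ξs - z‖ ^ p * g z)) A :=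
    (hIξsi.const_mul c).add (hIξs.const_mul c)
  have h2int : IntegrableOn (fun z => (lam / ‖z - x‖) ^ (2 * n) *
      (‖ξ - EuclideanGeometry.inversion x lam z‖ ^ p *
        g (EuclideanGeometry.inversion x lam z)) + ‖ξ - z‖ ^ p * g z) A :=
    hIξi.add hIξ
  have hsub := MeasureTheory.integral_sub h1int h2int
  rw [← hsub]
  have hAmeas : MeasurableSet A := by
    rw [hAc]; exact Metric.isOpen_ball.measurableSet.compl
  refine MeasureTheory.setIntegral_congr_fun hAmeas (fun z hz => ?_)
  -- pointwise identity
  have hdlam : lam ≤ ‖z - x‖ := hz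
  have hd : (0:ℝ) < ‖z - x‖ := lt_of_lt_of_le hlam hdlam
  have hzx : z ≠ x := by
    intro h; subst h; simp only [sub_self, norm_zero] at hd; exact lt_irrefl 0 hd
  have he : (0:ℝ) < ‖ξ - x‖ := by
    rw [norm_pos_iff]; exact sub_ne_zero.2 hξx
  have hqe : ‖ξs - z‖ * ‖ξ - x‖ = ‖ξ - EuclideanGeometry.inversion x lam z‖ * ‖z - x‖ := by
    have := EuclideanGeometry.dist_inversion_mul_dist_center_eq (c := x) (R := lam) hξx hzx
    simpa [dist_eq_norm] using this
  have hw : ‖ξs - EuclideanGeometry.inversion x lam z‖ =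
      lam ^ 2 / (‖ξ - x‖ * ‖z - x‖) * ‖ξ - z‖ := by
    have := EuclideanGeometry.dist_inversion_inversion (c := x) hξx hzx lam
    simpa [dist_eq_norm] using this
  -- abbreviations
  have h1 : c * ‖ξs - z‖ ^ p = (‖z - x‖ / lam) ^ p * ‖ξ - EuclideanGeometry.inversion x lam z‖ ^ p := by
    rw [hc, ← Real.mul_rpow (by positivity) (norm_nonneg _),
      ← Real.mul_rpow (by positivity) (by positivity)]
    congr 1
    rw [div_mul_eq_mul_div, mul_comm, hqe]
    ring
  have h2 : c * ‖ξs - EuclideanGeometry.inversion x lam z‖ ^ p =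
      (lam / ‖z - x‖) ^ p * ‖ξ - z‖ ^ p := by
    rw [hc, ← Real.mul_rpow (by positivity) (norm_nonneg _),
      ← Real.mul_rpow (by positivity) (norm_nonneg _)]
    congr 1
    rw [hw]
    field_simp
  have h3 : (‖z - x‖ / lam) ^ p * (lam / ‖z - x‖) ^ p = 1 := by
    rw [← Real.mul_rpow (by positivity) (by positivity)]
    rw [div_mul_div_comm, mul_comm ‖z - x‖ lam, div_self (by positivity), Real.one_rpow]
  have h4 : (lam / ‖z - x‖) ^ (p + 2 * (n:ℝ)) =
      (lam / ‖z - x‖) ^ p * (lam / ‖z - x‖) ^ (2 * n) := by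
    rw [Real.rpow_add (by positivity)]
    congr 1
    rw [show (2 * (n:ℝ)) = ((2 * n : ℕ) : ℝ) by push_cast; ring, Real.rpow_natCast]
  rw [kernelK, inversion_eq, h4]
  have hgz : f ‖z‖ (u z) = g z := rfl
  have hgiz : f ‖EuclideanGeometry.inversion x lam z‖ (u (EuclideanGeometry.inversion x lam z)) =
      g (EuclideanGeometry.inversion x lam z) := rfl
  rw [hgz, hgiz]
  set S := ‖ξ - EuclideanGeometry.inversion x lam z‖ ^ p
  set R := ‖ξ - z‖ ^ p
  set W := ‖ξs - EuclideanGeometry.inversion x lam z‖ ^ p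
  set Q := ‖ξs - z‖ ^ p
  set X := (‖z - x‖ / lam) ^ p
  set Y := (lam / ‖z - x‖) ^ p
  set Z := (lam / ‖z - x‖) ^ (2 * n)
  set G1 := g z
  set G2 := g (EuclideanGeometry.inversion x lam z)
  have h1' : c * Q = X * S := h1
  have h2' : c * W = Y * R := h2
  linear_combination (Z * G2) * h2' + G1 * h1' + (S * Z * G2) * h3
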